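/- Let k ≥ 2 and d_j = 2 for all 1 ≤ j ≤ k (a k-qubit system), and let λ ∈ ℂ with λ ≠ 0. Then the linear span S_{P,λ} of the Parthasarathy space S_P and the van der Monde vector z_λ contains no nonzero product vector other than the scalar multiples of z_λ; that is, S_{P,λ} is a quasi-completely entangled subspace of product index 1. -/

import Mathlib

noncomputable section

open scoped BigOperators ComplexConjugate

/-- the k-qubit Hilbert space (ℂ²)^{⊗k}, realized as ℂ^{2^k} -/
abbrev Hq (k : ℕ) : Type := EuclideanSpace ℂ (Fin k → Fin 2)

/-- elementary tensor u₁ ⊗ ⋯ ⊗ u_k of k qubit vectors -/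
def tpq (k : ℕ) (u : Fin k → EuclideanSpace ℂ (Fin 2)) : Hq k :=
  WithLp.toLp 2 (fun i => ∏ j, u j (i j))

/-- the van der Monde vector z_λ = ⊗_j (|0⟩ + λ|1⟩) -/
def zq (k : ℕ) (lam : ℂ) : Hq k := WithLp.toLp 2 (fun i => ∏ j, lam ^ ((i j : ℕ)))

/-- the van der Monde vector z_∞ = |1⟩^{⊗k} -/
def zqinf (k : ℕ) : Hq k := WithLp.toLp 2 (fun i => ∏ j, (if i j = 1 then 1 else 0))

/-- the span of all van der Monde vectors -/
def Fq (k : ℕ) : Submodule ℂ (Hq k) :=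
  Submodule.span ℂ (insert (zqinf k) (Set.range (zq k)))

/-- the Parthasarathy completely entangled subspace of the k-qubit system -/
def SPq (k : ℕ) : Submodule ℂ (Hq k) := (Fq k)ᗮ

/-- the set of one-dimensional subspaces of `T` spanned by (nonzero) product vectors -/
def prodLinesQ (k : ℕ) (T : Submodule ℂ (Hq k)) : Set (Submodule ℂ (Hq k)) :=
  {L | ∃ ξ : Hq k, ξ ≠ 0 ∧ ξ ∈ T ∧ (∃ u, ξ = tpq k u) ∧ L = Submodule.span ℂ {ξ}}

lemma hq_inner (k : ℕ) (x y : Hq k) :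
    @inner ℂ _ _ x y = ∑ i, conj (x i) * y i := by
  simp [PiLp.inner_apply, RCLike.inner_apply, mul_comm]

lemma inner_zq_tpq (k : ℕ) (μ : ℂ) (u : Fin k → EuclideanSpace ℂ (Fin 2)) :
    @inner ℂ _ _ (zq k μ) (tpq k u) = ∏ j, (u j 0 + conj μ * u j 1) := by
  have h : ∀ j : Fin k, u j 0 + conj μ * u j 1 = ∑ b : Fin 2, (conj μ) ^ (b:ℕ) * u j b := by
    intro j; rw [Fin.sum_univ_two]; norm_num
  rw [hq_inner]
  simp only [h]
  rw [Finset.prod_univ_sum]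
  rw [Fintype.piFinset_univ]
  refine Finset.sum_congr rfl fun i _ => ?_
  simp only [zq, tpq, PiLp.toLp_apply]
  rw [map_prod, ← Finset.prod_mul_distrib]
  exact Finset.prod_congr rfl fun j _ => by rw [map_pow]

lemma inner_zqinf_tpq (k : ℕ) (u : Fin k → EuclideanSpace ℂ (Fin 2)) :
    @inner ℂ _ _ (zqinf k) (tpq k u) = ∏ j, u j 1 := by
  have h : ∀ j : Fin k, u j 1 = ∑ b : Fin 2, conj (if b = 1 then (1:ℂ) else 0) * u j b := by
    intro j; rw [Fin.sum_univ_two]; norm_num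
  rw [hq_inner]
  rw [Finset.prod_congr rfl (fun j _ => h j)]
  rw [Finset.prod_univ_sum]
  rw [Fintype.piFinset_univ]
  refine Finset.sum_congr rfl fun i _ => ?_
  simp only [zqinf, tpq, PiLp.toLp_apply]
  rw [map_prod, ← Finset.prod_mul_distrib]

lemma zq_as_tpq (k : ℕ) (lam : ℂ) : zq k lam = tpq k (fun _ => WithLp.toLp 2 (fun b => lam ^ (b:ℕ))) := rfl

lemma zq_ne_zero (k : ℕ) (lam : ℂ) : zq k lam ≠ 0 := by
  intro h
  have := congrArg (fun v : Hq k => v (fun _ => 0)) h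
  simp [zq] at this

lemma tpq_eq_smul (k : ℕ) (lam : ℂ) (u : Fin k → EuclideanSpace ℂ (Fin 2))
    (h : ∀ j, u j 1 = lam * u j 0) :
    tpq k u = (∏ j, u j 0) • zq k lam := by
  have hb : ∀ j, ∀ b : Fin 2, u j b = u j 0 * lam ^ (b:ℕ) := by
    intro j b
    fin_cases b
    · simp
    · simp [h j]; ring
  ext i
  show ∏ j, u j (i j) = (∏ j, u j 0) * ∏ j, lam ^ ((i j : ℕ))
  rw [← Finset.prod_mul_distrib]
  exact Finset.prod_congr rfl fun j _ => hb j (i j)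

lemma key (k : ℕ) (hk : 2 ≤ k) (lam : ℂ) (hlam : lam ≠ 0) :
    ∀ ξ ∈ SPq k ⊔ Submodule.span ℂ {zq k lam}, ξ ≠ 0 →
      (∃ u, ξ = tpq k u) → ∃ c : ℂ, ξ = c • zq k lam := by
  rintro ξ hmem hne ⟨u, rfl⟩
  rw [Submodule.mem_sup] at hmem
  obtain ⟨s, hs, y, hy, hξ⟩ := hmem
  rw [Submodule.mem_span_singleton] at hy
  obtain ⟨c, rfl⟩ := hy
  have hsF : ∀ v ∈ Fq k, @inner ℂ _ _ v s = 0 := (Submodule.mem_orthogonal _ _).1 hs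
  have hinf_mem : zqinf k ∈ Fq k := Submodule.subset_span (Set.mem_insert _ _)
  have hzq_mem : ∀ μ, zq k μ ∈ Fq k := fun μ =>
    Submodule.subset_span (Set.mem_insert_of_mem _ ⟨μ, rfl⟩)
  have h1 : ∀ t : ℂ, ∏ j, (u j 0 + t * u j 1) = c * ∏ _j : Fin k, ((1:ℂ) + t * lam) := by
    intro t
    have e1 := inner_zq_tpq k (conj t) u
    rw [← hξ, inner_add_right, inner_smul_right, hsF _ (hzq_mem (conj t)), zero_add] at e1
    rw [zq_as_tpq k lam, inner_zq_tpq] at e1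
    simp only [Complex.conj_conj] at e1
    rw [← e1]
    norm_num
  have hinf : ∏ j, u j 1 = c * lam ^ k := by
    have e2 := inner_zqinf_tpq k u
    rw [← hξ, inner_add_right, inner_smul_right, hsF _ hinf_mem, zero_add] at e2
    rw [zq_as_tpq k lam, inner_zqinf_tpq] at e2
    rw [← e2]
    simp [Finset.prod_const]
  rcases eq_or_ne c 0 with rfl | hc
  · exfalso
    apply hne
    have hz : ∃ j, u j 0 = 0 ∧ u j 1 = 0 := by
      by_contra hcon
      push_neg at hcon
      obtain ⟨t, ht⟩ := Infinite.exists_notMem_finset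
        (Finset.univ.image fun j : Fin k => -(u j 0) / (u j 1))
      have h0 := h1 t
      rw [zero_mul] at h0
      refine (Finset.prod_ne_zero_iff.2 fun j _ => ?_) h0
      intro habs
      rcases eq_or_ne (u j 1) 0 with h10 | h10
      · exact (hcon j (by rwa [h10, mul_zero, add_zero] at habs)) h10
      · apply ht
        refine Finset.mem_image.2 ⟨j, Finset.mem_univ j, ?_⟩
        field_simp
        linear_combination -habs
    obtain ⟨j, hj0, hj1⟩ := hz
    have hub : ∀ b : Fin 2, u j b = 0 := by intro b; fin_cases b <;> assumption
    ext i
    show ∏ j', u j' (i j') = 0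
    exact Finset.prod_eq_zero (Finset.mem_univ j) (hub (i j))
  · have hprod : ∏ j, u j 1 ≠ 0 := by
      rw [hinf]; exact mul_ne_zero hc (pow_ne_zero _ hlam)
    have hu1 : ∀ j, u j 1 ≠ 0 := fun j => Finset.prod_ne_zero_iff.1 hprod j (Finset.mem_univ j)
    have hlin : ∀ j, u j 1 = lam * u j 0 := by
      intro j
      have h0 := h1 (-(u j 0) / (u j 1))
      have hL : ∏ j', (u j' 0 + (-(u j 0) / (u j 1)) * u j' 1) = 0 :=
        Finset.prod_eq_zero (Finset.mem_univ j) (by field_simp [hu1 j]; ring)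
      rw [hL] at h0
      have h2 : ∏ _j' : Fin k, ((1:ℂ) + (-(u j 0) / (u j 1)) * lam) = 0 :=
        (mul_eq_zero.1 h0.symm).resolve_left hc
      rw [Finset.prod_const, Finset.card_univ, Fintype.card_fin] at h2
      have h3 : (1:ℂ) + (-(u j 0) / (u j 1)) * lam = 0 :=
        pow_eq_zero_iff (by omega) |>.1 h2
      field_simp [hu1 j] at h3
      linear_combination h3
    exact ⟨∏ j, u j 0, tpq_eq_smul k lam u hlin⟩

theorem statement11 (k : ℕ) (hk : 2 ≤ k) (lam : ℂ) (hlam : lam ≠ 0) :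
    (∀ ξ ∈ SPq k ⊔ Submodule.span ℂ {zq k lam}, ξ ≠ 0 →
      (∃ u, ξ = tpq k u) → ∃ c : ℂ, ξ = c • zq k lam) ∧
    prodLinesQ k (SPq k ⊔ Submodule.span ℂ {zq k lam}) =
      {Submodule.span ℂ {zq k lam}} := by
  refine ⟨key k hk lam hlam, ?_⟩
  ext L
  simp only [Set.mem_singleton_iff, prodLinesQ, Set.mem_setOf_eq]
  constructor
  · rintro ⟨ξ, hne, hmem, hprod, rfl⟩
    obtain ⟨c, rfl⟩ := key k hk lam hlam ξ hmem hne hprod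
    have hc : c ≠ 0 := by rintro rfl; simp at hne
    exact Submodule.span_singleton_smul_eq (isUnit_iff_ne_zero.2 hc) _
  · rintro rfl
    exact ⟨zq k lam, zq_ne_zero k lam,
      Submodule.mem_sup_right (Submodule.mem_span_singleton_self _),
      ⟨_, zq_as_tpq k lam⟩, rfl⟩
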